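/- arXiv:2112.04884 — 7 statements merged into one kernel-verified Lean document; each statement's English description precedes it below -/
import Mathlib

section
/- Let X be a separable infinite-dimensional Banach space and T₁,…,T_N bounded linear operators on X (N ≥ 2). If T₁,…,T_N are d-topologically transitive, then they are densely d-hypercyclic; i.e., the set of vectors x such that {(T₁ⁿx,…,T_Nⁿx) : n ∈ ℕ} is dense in X^N is itself dense in X. -/
open Filter Topology

/-- If `T₁, …, T_N` are d-topologically transitive bounded operators on a separable
infinite-dimensional Banach space, then the set of d-hypercyclic vectors is dense. -/
theorem stmt0 {X : Type*} [NormedAddCommGroup X] [NormedSpace ℂ X]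
    [CompleteSpace X] [TopologicalSpace.SeparableSpace X]
    (hinf : ¬ FiniteDimensional ℂ X)
    (N : ℕ) (hN : 2 ≤ N) (T : Fin N → X →L[ℂ] X)
    (htrans : ∀ (V0 : Set X) (U : Fin N → Set X),
      IsOpen V0 → V0.Nonempty → (∀ i, IsOpen (U i)) → (∀ i, (U i).Nonempty) →
      ∃ n : ℕ, (V0 ∩ ⋂ i, (T i ^ n) ⁻¹' (U i)).Nonempty) :
    Dense {x : X | Dense (Set.range fun n : ℕ => fun i : Fin N => (T i ^ n) x)} := by
  obtain ⟨s, hsc, hse, hsb⟩ := TopologicalSpace.exists_countable_basis X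
  haveI : Countable s := hsc.to_subtype
  set G : (Fin N → s) → Set X := fun u => ⋃ n : ℕ, ⋂ i, (T i ^ n) ⁻¹' (u i : Set X)
    with hG
  have hune : ∀ (u : Fin N → s) (i : Fin N), ((u i : Set X)).Nonempty := by
    intro u i
    rcases Set.eq_empty_or_nonempty (u i : Set X) with h | h
    · exact absurd (h ▸ (u i).2) hse
    · exact h
  have hGo : ∀ u, IsOpen (G u) :=
    fun u => isOpen_iUnion fun n => isOpen_iInter_of_finite fun i =>
      (hsb.isOpen (u i).2).preimage (T i ^ n).continuous
  have hGd : ∀ u, Dense (G u) := by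
    intro u
    rw [dense_iff_inter_open]
    intro V hV hVne
    obtain ⟨n, x, hx⟩ := htrans V (fun i => (u i : Set X)) hV hVne
      (fun i => hsb.isOpen (u i).2) (fun i => hune u i)
    exact ⟨x, hx.1, Set.mem_iUnion.2 ⟨n, hx.2⟩⟩
  refine (dense_iInter_of_isOpen hGo hGd).mono ?_
  intro x hx
  simp only [Set.mem_iInter] at hx
  show Dense _
  rw [dense_iff_inter_open]
  intro O hO hOne
  obtain ⟨y, hy⟩ := hOne
  obtain ⟨F, w, hw, hwO⟩ := isOpen_pi_iff.1 hO y hy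
  -- choose basis elements
  have hchoice : ∀ i : Fin N, ∃ v : s, (i ∈ F → y i ∈ (v : Set X) ∧ (v : Set X) ⊆ w i) := by
    intro i
    by_cases hi : i ∈ F
    · obtain ⟨v, hvs, hyv, hvw⟩ := hsb.exists_subset_of_mem_open (hw i hi).2 (hw i hi).1
      exact ⟨⟨v, hvs⟩, fun _ => ⟨hyv, hvw⟩⟩
    · obtain ⟨v, hvs, hyv⟩ := Set.mem_sUnion.1 (hsb.sUnion_eq ▸ Set.mem_univ (y i))
      · exact ⟨⟨v, hvs⟩, fun h => absurd h hi⟩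
  choose u hu using hchoice
  obtain ⟨n, hn⟩ := Set.mem_iUnion.1 (hx u)
  refine ⟨fun i => (T i ^ n) x, ?_, ⟨n, rfl⟩⟩
  apply hwO
  intro i hi
  exact (hu i hi).2 (Set.mem_iInter.1 hn i)
end

section
/- Let X be a Banach space and T₁,…,T_N ∈ B(X) with N ≥ 2. Suppose there exist a strictly increasing sequence (n_k) of positive integers, a dense subset X₀ of X, and maps S_k : X₀^N → X such that: (i) for each x ∈ X₀ and 1 ≤ i ≤ N, Tᵢ^{n_k} x → 0 as k → ∞; and (ii) for each ε > 0, K ∈ ℕ, and x₁,…,x_N ∈ X₀ there exists k ≥ K with ‖S_k(x₁,…,x_N)‖ < ε and ‖Tᵢ^{n_k} S_k(x₁,…,x_N) − xᵢ‖ < ε for all 1 ≤ i ≤ N. Then T₁,…,T_N satisfy the Strong Disjoint Blow-up/Collapse Property. -/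
open Filter Topology

/-- Disjoint Blow-up/Collapse Criterion implies the Strong Disjoint Blow-up/Collapse
Property. -/
theorem stmt1 {X : Type*} [NormedAddCommGroup X] [NormedSpace ℂ X] [CompleteSpace X]
    (N : ℕ) (hN : 2 ≤ N) (T : Fin N → X →L[ℂ] X)
    (n : ℕ → ℕ) (hmono : StrictMono n) (hpos : ∀ k, 0 < n k)
    (X₀ : Set X) (hdense : Dense X₀)
    (S : ℕ → (Fin N → X) → X)
    (h1 : ∀ x ∈ X₀, ∀ i, Tendsto (fun k => (T i ^ n k) x) atTop (𝓝 0))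
    (h2 : ∀ ε > (0 : ℝ), ∀ K : ℕ, ∀ x : Fin N → X, (∀ i, x i ∈ X₀) →
      ∃ k ≥ K, ‖S k x‖ < ε ∧ ∀ i, ‖(T i ^ n k) (S k x) - x i‖ < ε) :
    ∀ (L : ℕ) (W : Set X) (U : Fin L → Set X) (U' : Fin N → Set X),
      IsOpen W → (0 : X) ∈ W →
      (∀ ℓ, IsOpen (U ℓ)) → (∀ ℓ, (U ℓ).Nonempty) →
      (∀ i, IsOpen (U' i)) → (∀ i, (U' i).Nonempty) →
      ∃ m : ℕ, (W ∩ ⋂ i, (T i ^ m) ⁻¹' (U' i)).Nonempty ∧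
        ∀ ℓ : Fin L, (U ℓ ∩ ⋂ i, (T i ^ m) ⁻¹' W).Nonempty := by
  intro L W U U' hW hW0 hUopen hUne hU'open hU'ne
  obtain ⟨δ, hδ, hδW⟩ := Metric.isOpen_iff.mp hW 0 hW0
  choose x' hx'U hx'X using fun i =>
    (hdense.inter_open_nonempty (U' i) (hU'open i) (hU'ne i))
  choose εi hεipos hεiball using fun i =>
    Metric.isOpen_iff.mp (hU'open i) (x' i) (hx'U i)
  choose y hyU hyX using fun ℓ =>
    (hdense.inter_open_nonempty (U ℓ) (hUopen ℓ) (hUne ℓ))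
  have hNE : (Finset.univ : Finset (Fin N)).Nonempty :=
    ⟨⟨0, by omega⟩, Finset.mem_univ _⟩
  set ε : ℝ := min δ (Finset.univ.inf' hNE εi) with hε
  have hεpos : 0 < ε := lt_min hδ (by
    rw [Finset.lt_inf'_iff]
    exact fun i _ => hεipos i)
  have hεδ : ε ≤ δ := min_le_left _ _
  have hεεi : ∀ i, ε ≤ εi i := fun i =>
    le_trans (min_le_right _ _) (Finset.inf'_le _ (Finset.mem_univ i))
  have hev : ∀ᶠ k in atTop, ∀ ℓ i, (T i ^ n k) (y ℓ) ∈ W := by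
    rw [eventually_all]
    intro ℓ
    rw [eventually_all]
    intro i
    exact (h1 (y ℓ) (hyX ℓ) i).eventually (hW.mem_nhds hW0)
  obtain ⟨K, hK⟩ := eventually_atTop.mp hev
  obtain ⟨k, hkK, hS, hT⟩ := h2 ε hεpos K x' hx'X
  refine ⟨n k, ⟨S k x', ?_, ?_⟩, fun ℓ => ⟨y ℓ, hyU ℓ, ?_⟩⟩
  · exact hδW (by simpa [Metric.mem_ball, dist_eq_norm] using lt_of_lt_of_le hS hεδ)
  · rw [Set.mem_iInter]
    intro i
    exact hεiball i (by
      simpa [Metric.mem_ball, dist_eq_norm] using lt_of_lt_of_le (hT i) (hεεi i))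
  · rw [Set.mem_iInter]
    intro i
    exact hK k hkK ℓ i
end

section
/- Let X be a Banach space and T₁,…,T_N ∈ B(X) with N ≥ 2. Suppose there exist a strictly increasing sequence (n_k) of positive integers, a dense subset X₀ of X, and maps S_k : X₀ → X such that: (i) for each x ∈ X₀ and 1 ≤ i ≤ N, Tᵢ^{n_k} x → 0 as k → ∞; and (ii) for each ε > 0, K ∈ ℕ, and x₀ ∈ X₀ there exists k ≥ K with ‖S_k(x₀)‖ < ε and ‖Tᵢ^{n_k} S_k(x₀) − x₀‖ < ε for every 1 ≤ i ≤ N. Then T₁,…,T_N satisfy the Simultaneous Blow-up/Collapse Property. -/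
open Filter Topology

/-- Simultaneous Blow-up/Collapse Criterion implies the Simultaneous Blow-up/Collapse
Property. -/
theorem stmt2 {X : Type*} [NormedAddCommGroup X] [NormedSpace ℂ X] [CompleteSpace X]
    (N : ℕ) (hN : 2 ≤ N) (T : Fin N → X →L[ℂ] X)
    (n : ℕ → ℕ) (hmono : StrictMono n) (hpos : ∀ k, 0 < n k)
    (X₀ : Set X) (hdense : Dense X₀)
    (S : ℕ → X → X)
    (h1 : ∀ x ∈ X₀, ∀ i, Tendsto (fun k => (T i ^ n k) x) atTop (𝓝 0))
    (h2 : ∀ ε > (0 : ℝ), ∀ K : ℕ, ∀ x₀ ∈ X₀,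
      ∃ k ≥ K, ‖S k x₀‖ < ε ∧ ∀ i, ‖(T i ^ n k) (S k x₀) - x₀‖ < ε) :
    ∀ (W U V : Set X),
      IsOpen W → (0 : X) ∈ W → IsOpen U → U.Nonempty → IsOpen V → V.Nonempty →
      ∃ m : ℕ, (W ∩ ⋂ i, (T i ^ m) ⁻¹' U).Nonempty ∧
        (V ∩ ⋂ i, (T i ^ m) ⁻¹' W).Nonempty := by
  intro W U V hW hW0 hU hUne hV hVne
  -- pick u₀ ∈ X₀ ∩ U and v ∈ X₀ ∩ V
  obtain ⟨u₀, hu₀X, hu₀U⟩ := hdense.exists_mem_open hU hUne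
  obtain ⟨v, hvX, hvV⟩ := hdense.exists_mem_open hV hVne
  -- radii
  obtain ⟨ε₁, hε₁, hball₁⟩ := Metric.isOpen_iff.1 hW 0 hW0
  obtain ⟨ε₂, hε₂, hball₂⟩ := Metric.isOpen_iff.1 hU u₀ hu₀U
  set ε := min ε₁ ε₂ with hε
  have hεpos : 0 < ε := lt_min hε₁ hε₂
  -- eventually T i ^ n k v ∈ W for all i
  have hev : ∀ᶠ k in atTop, ∀ i, (T i ^ n k) v ∈ W := by
    rw [eventually_all]
    intro i
    exact (h1 v hvX i).eventually (hW.mem_nhds hW0)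
  obtain ⟨K, hK⟩ := eventually_atTop.1 hev
  obtain ⟨k, hkK, hSsmall, hSclose⟩ := h2 ε hεpos K u₀ hu₀X
  refine ⟨n k, ⟨S k u₀, ?_, ?_⟩, ⟨v, hvV, ?_⟩⟩
  · apply hball₁
    simpa [Metric.mem_ball, dist_eq_norm] using lt_of_lt_of_le hSsmall (min_le_left _ _)
  · rw [Set.mem_iInter]
    intro i
    apply hball₂
    simpa [Metric.mem_ball, dist_eq_norm] using lt_of_lt_of_le (hSclose i) (min_le_right _ _)
  · rw [Set.mem_iInter]
    intro i
    exact hK k hkK i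
end

section
/- Let T₁,…,T_N (N ≥ 2) be unilateral pseudo-shifts on ℓ^p(ℕ) with maps f₁,…,f_N and weights ω^{(i)}. If T₁,…,T_N possess a d-hypercyclic vector x = Σ_m α_m e_m, then there exists a strictly increasing sequence (n_k) of positive integers such that for all integers i, m with 1 ≤ i ≤ N, |W^{(i)}_{m,n_k}| = |∏_{ν=1}^{n_k} w^{(i)}_{f_i^ν(m)}| → ∞ as k → ∞. -/
open Filter Topology
open scoped ENNReal

/-- If unilateral pseudo-shifts `T₁, …, T_N` possess a d-hypercyclic vector, then there is
a strictly increasing sequence `(n_k)` of positive integers along which all the weight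
products `|W^{(i)}_{m,n_k}|` tend to infinity. -/
theorem stmt8 (p : ℝ≥0∞) [Fact (1 ≤ p)] (hp : p ≠ ⊤) (N : ℕ) (hN : 2 ≤ N)
    (f : Fin N → ℕ+ → ℕ+) (hf : ∀ i, StrictMono (f i)) (hf1 : ∀ i, 1 < f i 1)
    (w : Fin N → ℕ+ → ℂ) (hwb : ∀ i, ∃ C, ∀ m, ‖w i m‖ ≤ C) (hw0 : ∀ i m, w i m ≠ 0)
    (T : Fin N → (lp (fun _ : ℕ+ => ℂ) p →L[ℂ] lp (fun _ : ℕ+ => ℂ) p))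
    (hT : ∀ i (x : lp (fun _ : ℕ+ => ℂ) p) (m : ℕ+),
      (T i x : ∀ _ : ℕ+, ℂ) m = w i (f i m) * (x : ∀ _ : ℕ+, ℂ) (f i m))
    (x : lp (fun _ : ℕ+ => ℂ) p)
    (hx : Dense (Set.range fun nn : ℕ => fun i : Fin N => (T i ^ nn) x)) :
    ∃ n : ℕ → ℕ, StrictMono n ∧ (∀ k, 0 < n k) ∧
      ∀ i m, Tendsto
        (fun k => ‖∏ ν ∈ Finset.Icc 1 (n k), w i ((f i)^[ν] m)‖) atTop atTop := by
  classical
  have hp0 : p ≠ 0 := by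
    intro h
    have h1 : (1 : ℝ≥0∞) ≤ p := Fact.out
    rw [h] at h1
    simp at h1
  -- coordinate formula
  have coord : ∀ (i : Fin N) (nn : ℕ) (y : lp (fun _ : ℕ+ => ℂ) p) (m : ℕ+),
      ((T i ^ nn) y : ∀ _ : ℕ+, ℂ) m
        = (∏ ν ∈ Finset.Icc 1 nn, w i ((f i)^[ν] m)) * (y : ∀ _ : ℕ+, ℂ) ((f i)^[nn] m) := by
    intro i nn
    induction nn with
    | zero => intro y m; simp
    | succ n ih =>
      intro y m
      have h1 : ((T i ^ (n+1)) y : ∀ _ : ℕ+, ℂ) m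
          = ((T i ^ n) (T i y) : ∀ _ : ℕ+, ℂ) m := by
        rw [pow_succ, ContinuousLinearMap.mul_apply]
      rw [h1, ih (T i y) m, hT i y,
        Finset.prod_Icc_succ_top (Nat.le_add_left 1 n),
        Function.iterate_succ_apply' (f i) n m]
      ring
  set C : ℝ := ‖x‖ + 1 with hC
  have hCpos : 0 < C := by positivity
  have hxC : ∀ j : ℕ+, ‖(x : ∀ _ : ℕ+, ℂ) j‖ < C := fun j =>
    lt_of_le_of_lt (lp.norm_apply_le_norm hp0 x j) (by simp [hC])
  have step : ∀ prev k : ℕ, ∃ nn : ℕ, prev < nn ∧ ∀ i (m : ℕ+), (m : ℕ) ≤ k + 1 →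
      (k + 1 : ℝ) ≤ ‖∏ ν ∈ Finset.Icc 1 nn, w i ((f i)^[ν] m)‖ := by
    intro prev k
    have i₀ : Fin N := ⟨0, by omega⟩
    set M : ℝ := ∑ j ∈ Finset.range (prev + 1), ‖(T i₀ ^ j) x‖ with hMdef
    have hM : ∀ j ≤ prev, ‖(T i₀ ^ j) x‖ ≤ M := by
      intro j hj
      exact Finset.single_le_sum (f := fun j => ‖(T i₀ ^ j) x‖)
        (fun _ _ => norm_nonneg _) (Finset.mem_range.mpr (by omega))
    have hMnn : 0 ≤ M := Finset.sum_nonneg fun _ _ => norm_nonneg _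
    set a : ℝ := max ((k + 1) * C + 1) (M + 2) with ha
    have ha1 : (k + 1) * C + 1 ≤ a := le_max_left _ _
    have ha2 : M + 2 ≤ a := le_max_right _ _
    have hapos : 0 < a := lt_of_lt_of_le (by positivity) ha1
    set K : ℕ+ := ⟨k + 1, k.succ_pos⟩ with hK
    set y : lp (fun _ : ℕ+ => ℂ) p :=
      ∑ m ∈ Finset.Icc 1 K, lp.single p m (a : ℂ) with hy
    have hycoord : ∀ m : ℕ+, (m : ℕ) ≤ k + 1 → (y : ∀ _ : ℕ+, ℂ) m = (a : ℂ) := by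
      intro m hm
      have hmem : m ∈ Finset.Icc 1 K := by
        rw [Finset.mem_Icc]
        exact ⟨m.one_le, by rwa [← PNat.coe_le_coe]⟩
      have h0 : (y : ∀ _ : ℕ+, ℂ) m = ∑ j ∈ Finset.Icc 1 K, lp.single p j (a : ℂ) m := by
        rw [hy, lp.coeFn_sum, Finset.sum_apply]
      have h1 : ∑ j ∈ Finset.Icc 1 K, (lp.single p j (a : ℂ) : ∀ _ : ℕ+, ℂ) m
          = (a : ℂ) := by
        have h2 : ∀ j ∈ Finset.Icc 1 K, j ≠ m →
            (lp.single p j (a : ℂ) : ∀ _ : ℕ+, ℂ) m = 0 := fun j _ hj => by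
          simpa using lp.single_apply_ne (E := fun _ : ℕ+ => ℂ) p j (a : ℂ) (Ne.symm hj)
        exact (Finset.sum_eq_single_of_mem m hmem h2).trans
          (lp.single_apply_self (E := fun _ : ℕ+ => ℂ) p m (a : ℂ))
      rw [h0, h1]
    have hynorm : a ≤ ‖y‖ := by
      have h1 : ‖(y : ∀ _ : ℕ+, ℂ) 1‖ ≤ ‖y‖ := lp.norm_apply_le_norm hp0 y 1
      rw [hycoord 1 (by simp)] at h1
      rw [Complex.norm_real, Real.norm_eq_abs, abs_of_pos hapos] at h1
      exact h1
    obtain ⟨z, ⟨nn, rfl⟩, hz⟩ := hx.exists_mem_open (Metric.isOpen_ball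
      (x := (fun _ : Fin N => y)) (ε := 1)) ⟨_, Metric.mem_ball_self one_pos⟩
    rw [Metric.mem_ball, dist_pi_lt_iff one_pos] at hz
    have hclose : ∀ i : Fin N, ‖(T i ^ nn) x - y‖ < 1 := fun i => by
      simpa [dist_eq_norm] using hz i
    have hcoordclose : ∀ (i : Fin N) (m : ℕ+), (m : ℕ) ≤ k + 1 →
        ‖((T i ^ nn) x : ∀ _ : ℕ+, ℂ) m - (a : ℂ)‖ < 1 := by
      intro i m hm
      have h1 := lp.norm_apply_le_norm hp0 ((T i ^ nn) x - y) m
      rw [lp.coeFn_sub, Pi.sub_apply, hycoord m hm] at h1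
      exact lt_of_le_of_lt h1 (hclose i)
    refine ⟨nn, ?_, ?_⟩
    · by_contra hle
      push_neg at hle
      have h1 : ‖y‖ - ‖(T i₀ ^ nn) x‖ ≤ ‖y - (T i₀ ^ nn) x‖ := norm_sub_norm_le _ _
      rw [norm_sub_rev] at h1
      have h2 := hM nn hle
      have h3 := hclose i₀
      linarith
    · intro i m hm
      have hc := hcoordclose i m hm
      rw [coord i nn x m] at hc
      set W : ℂ := ∏ ν ∈ Finset.Icc 1 nn, w i ((f i)^[ν] m) with hW
      set α : ℂ := (x : ∀ _ : ℕ+, ℂ) ((f i)^[nn] m) with hα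
      have h1 : a - 1 ≤ ‖W * α‖ := by
        have h2 : ‖(a : ℂ)‖ - ‖W * α‖ ≤ ‖(a : ℂ) - W * α‖ := norm_sub_norm_le _ _
        rw [norm_sub_rev] at h2
        rw [Complex.norm_real, Real.norm_eq_abs, abs_of_pos hapos] at h2
        linarith
      rw [norm_mul] at h1
      have h3 := hxC ((f i)^[nn] m)
      rw [← hα] at h3
      nlinarith [norm_nonneg W, norm_nonneg α]
  choose g hg1 hg2 using step
  set n : ℕ → ℕ := fun k => Nat.rec (g 0 0) (fun k prev => g prev (k + 1)) k with hn
  have hsucc : ∀ k, n (k + 1) = g (n k) (k + 1) := fun k => rfl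
  have hmono : StrictMono n := strictMono_nat_of_lt_succ fun k => by
    rw [hsucc]; exact hg1 (n k) (k + 1)
  have hbound : ∀ k (i : Fin N) (m : ℕ+), (m : ℕ) ≤ k + 1 →
      (k + 1 : ℝ) ≤ ‖∏ ν ∈ Finset.Icc 1 (n k), w i ((f i)^[ν] m)‖ := by
    intro k
    cases k with
    | zero => exact hg2 0 0
    | succ k => exact hg2 (n k) (k + 1)
  refine ⟨n, hmono, ?_, ?_⟩
  · intro k
    have h0 : 0 < n 0 := hg1 0 0
    exact lt_of_lt_of_le h0 (hmono.monotone (Nat.zero_le k))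
  · intro i m
    refine tendsto_atTop_mono' atTop ?_
      (tendsto_atTop_add_const_right atTop 1 tendsto_natCast_atTop_atTop)
    filter_upwards [eventually_ge_atTop (m : ℕ)] with k hk
    exact hbound k i m (by omega)
end

section
/- Let T₁,…,T_N (N ≥ 2) be unilateral pseudo-shifts on ℓ^p(ℕ). If at least two of the underlying maps f_i and f_ℓ with i ≠ ℓ are equal, then T₁,…,T_N fail condition (iv)(b) of the d-weakly-mixing characterization: there is no n ∈ ℕ and M ∈ ℕ with f_ℓⁿ([M]) ∩ f_iⁿ([M]) = ∅. In particular, N ≥ 2 unilateral weighted backward shifts (all with shifting map m ↦ m+1) never satisfy the Disjoint Hypercyclicity Criterion. -/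
/-- If two of the shifting maps of a tuple of unilateral pseudo-shifts coincide, then for
no `n` and `M` are the sets `f_ℓⁿ([M])` and `f_iⁿ([M])` disjoint, so condition (iv)(b) of
the d-weakly-mixing characterization fails.  In particular this applies to unilateral
weighted backward shifts, whose shifting maps are all `m ↦ m + 1`. -/
theorem stmt10 (N : ℕ) (hN : 2 ≤ N) (f : Fin N → ℕ+ → ℕ+)
    (hf : ∀ i, StrictMono (f i)) (hf1 : ∀ i, 1 < f i 1)
    (i ℓ : Fin N) (hil : i ≠ ℓ) (hfeq : f i = f ℓ) :
    ¬ ∃ (n : ℕ) (M : ℕ+),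
      {j : ℕ+ | ∃ m ≤ M, (f ℓ)^[n] m = j} ∩ {j : ℕ+ | ∃ m ≤ M, (f i)^[n] m = j} = ∅ := by
  rintro ⟨n, M, h⟩
  have : (f ℓ)^[n] 1 ∈ ({j : ℕ+ | ∃ m ≤ M, (f ℓ)^[n] m = j} ∩
      {j : ℕ+ | ∃ m ≤ M, (f i)^[n] m = j}) := by
    constructor
    · exact ⟨1, M.one_le, rfl⟩
    · exact ⟨1, M.one_le, by rw [hfeq]⟩
  rw [h] at this
  exact this
end

section
/- Let T₁,…,T_N (N ≥ 2) be unilateral weighted backward shifts on ℓ^p(ℕ) with weight sequences ω^{(i)} = (w_m^{(i)}). If T₁,…,T_N are s-hypercyclic, then sup_{n≥1} min{|∏_{ν=1}^n w^{(i)}_{1+ν}| : 1 ≤ i ≤ N} = ∞; that is, Salas's condition for hypercyclicity of the direct sum T₁ ⊕ ⋯ ⊕ T_N holds. -/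
open scoped ENNReal

private lemma pow_apply_aux (p : ℝ≥0∞) [Fact (1 ≤ p)] (N : ℕ)
    (w : Fin N → ℕ+ → ℂ)
    (T : Fin N → (lp (fun _ : ℕ+ => ℂ) p →L[ℂ] lp (fun _ : ℕ+ => ℂ) p))
    (hT : ∀ i (x : lp (fun _ : ℕ+ => ℂ) p) (m : ℕ+),
      (T i x : ∀ _ : ℕ+, ℂ) m = w i (m + 1) * (x : ∀ _ : ℕ+, ℂ) (m + 1))
    (i : Fin N) (n : ℕ) (x : lp (fun _ : ℕ+ => ℂ) p) (m : ℕ+) :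
    ((T i ^ n) x : ∀ _ : ℕ+, ℂ) m =
      (∏ ν ∈ Finset.Icc 1 n, w i (⟨(m : ℕ) + ν, by positivity⟩ : ℕ+)) *
        (x : ∀ _ : ℕ+, ℂ) (⟨(m : ℕ) + n, by positivity⟩ : ℕ+) := by
  induction n generalizing x with
  | zero =>
      rw [pow_zero, ContinuousLinearMap.one_apply,
        Finset.Icc_eq_empty (by omega : ¬ (1:ℕ) ≤ 0), Finset.prod_empty, one_mul]
      exact congrArg (fun k => (x : ∀ _ : ℕ+, ℂ) k)
        (PNat.coe_injective (Nat.add_zero (m : ℕ)).symm)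
  | succ n ih =>
      rw [pow_succ, ContinuousLinearMap.mul_apply, ih (T i x),
        Finset.prod_Icc_succ_top (by omega : 1 ≤ n + 1)]
      have h1 : ((⟨(m : ℕ) + n, by positivity⟩ : ℕ+) + 1) =
          (⟨(m : ℕ) + (n + 1), by positivity⟩ : ℕ+) := by
        apply PNat.coe_injective
        show (m : ℕ) + n + 1 = (m : ℕ) + (n + 1)
        simp [Nat.add_assoc]
      erw [hT i x, h1]
      ring

/-- If unilateral weighted backward shifts `T₁, …, T_N` on ℓᵖ(ℕ) are s-hypercyclic, then
Salas's condition holds: `sup_n min_i |∏_{ν=1}^n w^{(i)}_{1+ν}| = ∞`, so the direct sum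
`T₁ ⊕ ⋯ ⊕ T_N` is hypercyclic. -/
theorem stmt13 (p : ℝ≥0∞) [Fact (1 ≤ p)] (hp : p ≠ ⊤) (N : ℕ) (hN : 2 ≤ N)
    (w : Fin N → ℕ+ → ℂ) (hwb : ∀ i, ∃ C, ∀ m, ‖w i m‖ ≤ C)
    (T : Fin N → (lp (fun _ : ℕ+ => ℂ) p →L[ℂ] lp (fun _ : ℕ+ => ℂ) p))
    (hT : ∀ i (x : lp (fun _ : ℕ+ => ℂ) p) (m : ℕ+),
      (T i x : ∀ _ : ℕ+, ℂ) m = w i (m + 1) * (x : ∀ _ : ℕ+, ℂ) (m + 1))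
    (hs : ∃ x : lp (fun _ : ℕ+ => ℂ) p, ∀ y : lp (fun _ : ℕ+ => ℂ) p,
      (fun _ : Fin N => y) ∈
        closure (Set.range fun nn : ℕ => fun i : Fin N => (T i ^ nn) x)) :
    ∀ C : ℝ, ∃ n : ℕ, 1 ≤ n ∧
      ∀ i, C < ‖∏ ν ∈ Finset.Icc 1 n, w i (⟨1 + ν, by omega⟩ : ℕ+)‖ := by
  intro C
  obtain ⟨x, hx⟩ := hs
  have hp0 : p ≠ 0 := by
    have := (Fact.out : (1 : ℝ≥0∞) ≤ p); intro h; simp [h] at this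
  -- choose a large target
  set M : ℝ := max (C * ‖x‖ + 2) (‖x‖ + 2) with hM
  have hM2 : ‖x‖ + 2 ≤ M := le_max_right _ _
  have hM1 : C * ‖x‖ + 2 ≤ M := le_max_left _ _
  set y : lp (fun _ : ℕ+ => ℂ) p := lp.single p 1 (M : ℂ) with hy
  have hyc := hx y
  rw [Metric.mem_closure_iff] at hyc
  obtain ⟨b, hb, hdist⟩ := hyc 1 one_pos
  obtain ⟨n, rfl⟩ := hb
  -- coordinate-1 estimate for each i
  have key : ∀ i : Fin N,
      ‖((T i ^ n) x : ∀ _ : ℕ+, ℂ) 1 - (M : ℂ)‖ < 1 := by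
    intro i
    have h1 : dist y ((T i ^ n) x) ≤ dist (fun _ : Fin N => y)
        (fun i : Fin N => (T i ^ n) x) :=
      dist_le_pi_dist (fun _ : Fin N => y) (fun i : Fin N => (T i ^ n) x) i
    have h2 : dist y ((T i ^ n) x) < 1 := lt_of_le_of_lt h1 hdist
    have h3 : ‖(y - (T i ^ n) x : lp (fun _ : ℕ+ => ℂ) p)‖ < 1 := by
      rwa [dist_eq_norm] at h2
    have h4 : ‖((y - (T i ^ n) x : lp (fun _ : ℕ+ => ℂ) p) : ∀ _ : ℕ+, ℂ) 1‖ ≤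
        ‖(y - (T i ^ n) x : lp (fun _ : ℕ+ => ℂ) p)‖ :=
      lp.norm_apply_le_norm hp0 _ 1
    have h5 : ((y - (T i ^ n) x : lp (fun _ : ℕ+ => ℂ) p) : ∀ _ : ℕ+, ℂ) 1 =
        (M : ℂ) - ((T i ^ n) x : ∀ _ : ℕ+, ℂ) 1 := by
      rw [lp.coeFn_sub, Pi.sub_apply, hy, lp.single_apply_self]
    have := lt_of_le_of_lt h4 h3
    rw [h5] at this
    rwa [← norm_neg, neg_sub] at this
  -- n must be ≥ 1
  have hxn : ∀ m : ℕ+, ‖(x : ∀ _ : ℕ+, ℂ) m‖ ≤ ‖x‖ := fun m =>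
    lp.norm_apply_le_norm hp0 x m
  have hn1 : 1 ≤ n := by
    by_contra h
    have hn0 : n = 0 := by omega
    have := key ⟨0, by omega⟩
    rw [hn0] at this
    simp only [pow_zero, ContinuousLinearMap.one_apply] at this
    have h6 : ‖(M : ℂ)‖ - ‖(x : ∀ _ : ℕ+, ℂ) 1‖ ≤
        ‖(x : ∀ _ : ℕ+, ℂ) 1 - (M : ℂ)‖ := by
      rw [norm_sub_rev]
      exact norm_sub_norm_le _ _
    have hMnorm : ‖(M : ℂ)‖ = M := by
      rw [Complex.norm_real, Real.norm_eq_abs, abs_of_nonneg]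
      nlinarith [norm_nonneg x]
    nlinarith [hxn 1, key ⟨0, by omega⟩, h6]
  refine ⟨n, hn1, fun i => ?_⟩
  have hk := key i
  rw [pow_apply_aux p N w T hT i n x 1] at hk
  set P : ℂ := ∏ ν ∈ Finset.Icc 1 n, w i (⟨1 + ν, by omega⟩ : ℕ+) with hP
  set xc : ℂ := (x : ∀ _ : ℕ+, ℂ) (⟨1 + n, by omega⟩ : ℕ+) with hxc
  have hP1 : ‖P * xc - (M : ℂ)‖ < 1 := by
    convert hk using 3 <;> simp [hP, hxc]
  have hlow : M - 1 < ‖P * xc‖ := by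
    have h6 : ‖(M : ℂ)‖ - ‖P * xc‖ ≤ ‖P * xc - (M : ℂ)‖ := by
      rw [norm_sub_rev]
      exact norm_sub_norm_le _ _
    have hMnorm : ‖(M : ℂ)‖ = M := by
      rw [Complex.norm_real, Real.norm_eq_abs, abs_of_nonneg]
      nlinarith [norm_nonneg x]
    linarith
  rw [norm_mul] at hlow
  have hxcle : ‖xc‖ ≤ ‖x‖ := hxn _
  have hxpos : 0 < ‖x‖ := by
    rcases le_or_gt ‖x‖ 0 with h | h
    · exfalso
      have : ‖xc‖ = 0 := le_antisymm (hxcle.trans h) (norm_nonneg _)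
      rw [this, mul_zero] at hlow
      nlinarith [norm_nonneg x]
    · exact h
  -- M - 1 < ‖P‖ * ‖xc‖ ≤ ‖P‖ * ‖x‖, and C * ‖x‖ + 1 ≤ M - 1
  have hPnn : 0 ≤ ‖P‖ := norm_nonneg _
  nlinarith [mul_le_mul_of_nonneg_left hxcle hPnn]
end

section
/- Let X be a Banach space, T₁,…,T_N ∈ B(X) with N ≥ 2. If T₁,…,T_N satisfy the Simultaneous Blow-up/Collapse Property, then they are s-topologically transitive: for any nonempty open sets U, V ⊆ X there exists n ∈ ℕ with V ∩ T₁^{-n}(U) ∩ ⋯ ∩ T_N^{-n}(U) ≠ ∅. -/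
/-- If `T₁, …, T_N` satisfy the Simultaneous Blow-up/Collapse Property, then they are
s-topologically transitive. -/
theorem stmt19 {X : Type*} [NormedAddCommGroup X] [NormedSpace ℂ X] [CompleteSpace X]
    (N : ℕ) (hN : 2 ≤ N) (T : Fin N → X →L[ℂ] X)
    (h : ∀ (W U V : Set X),
      IsOpen W → (0 : X) ∈ W → IsOpen U → U.Nonempty → IsOpen V → V.Nonempty →
      ∃ n : ℕ, (W ∩ ⋂ i, (T i ^ n) ⁻¹' U).Nonempty ∧
        (V ∩ ⋂ i, (T i ^ n) ⁻¹' W).Nonempty) :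
    ∀ (U V : Set X), IsOpen U → U.Nonempty → IsOpen V → V.Nonempty →
      ∃ n : ℕ, (V ∩ ⋂ i, (T i ^ n) ⁻¹' U).Nonempty := by
  intro U V hU hUne hV hVne
  obtain ⟨u, hu⟩ := hUne
  obtain ⟨v, hv⟩ := hVne
  obtain ⟨ε, hε, hεU⟩ := Metric.isOpen_iff.mp hU u hu
  obtain ⟨δ, hδ, hδV⟩ := Metric.isOpen_iff.mp hV v hv
  set r := min ε δ with hr
  have hr0 : 0 < r := lt_min hε hδ
  have hr2 : 0 < r / 2 := by positivity
  obtain ⟨n, ⟨w, hwW, hwU⟩, ⟨v', hv'V, hv'W⟩⟩ :=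
    h (Metric.ball 0 (r / 2)) (Metric.ball u (r / 2)) (Metric.ball v (r / 2))
      Metric.isOpen_ball (Metric.mem_ball_self hr2) Metric.isOpen_ball
      ⟨u, Metric.mem_ball_self hr2⟩ Metric.isOpen_ball
      ⟨v, Metric.mem_ball_self hr2⟩
  simp only [Set.mem_iInter, Set.mem_preimage, Metric.mem_ball] at hwW hwU hv'V hv'W
  refine ⟨n, v' + w, ?_, ?_⟩
  · apply hδV
    rw [Metric.mem_ball]
    have h1 : dist (v' + w) v' = dist w 0 := by
      simp [dist_eq_norm]
    calc dist (v' + w) v ≤ dist (v' + w) v' + dist v' v := dist_triangle _ _ _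
      _ < r / 2 + r / 2 := add_lt_add (h1 ▸ hwW) hv'V
      _ = r := by ring
      _ ≤ δ := min_le_right _ _
  · rw [Set.mem_iInter]
    intro i
    rw [Set.mem_preimage]
    apply hεU
    rw [Metric.mem_ball, map_add]
    have h1 : dist ((T i ^ n) v' + (T i ^ n) w) ((T i ^ n) w) = dist ((T i ^ n) v') 0 := by
      simp [dist_eq_norm]
    calc dist ((T i ^ n) v' + (T i ^ n) w) u
        ≤ dist ((T i ^ n) v' + (T i ^ n) w) ((T i ^ n) w) + dist ((T i ^ n) w) u :=
          dist_triangle _ _ _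
      _ < r / 2 + r / 2 := add_lt_add (h1 ▸ hv'W i) (hwU i)
      _ = r := by ring
      _ ≤ ε := min_le_left _ _
end
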